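/- arXiv:math-ph/0605012 — 5 statements merged into one kernel-verified Lean document; each statement's English description precedes it below -/
import Mathlib

section
/- For every real σ > 0, the Bose function g_σ(ζ) = (ζ/Γ(σ)) ∫₀^∞ t^{σ-1} e^{-t} / (1 − ζ e^{-t}) dt is a well-defined complex-differentiable (analytic) function of ζ on the open set ℂ \ [1, ∞). -/
open MeasureTheory

private lemma bose_cut_closed : IsClosed (Complex.ofReal '' Set.Ici (1 : ℝ)) :=
  (Complex.isometry_ofReal.isClosedEmbedding.isClosedMap) _ isClosed_Ici

private lemma bose_ne_zero {ζ : ℂ} (hζ : ζ ∉ Complex.ofReal '' Set.Ici (1 : ℝ))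
    {x : ℝ} (hx : x ∈ Set.Icc (0 : ℝ) 1) : (1 : ℂ) - ζ * x ≠ 0 := by
  intro h
  have hx0 : x ≠ 0 := by
    rintro rfl; simp at h
  have hx0' : 0 < x := lt_of_le_of_ne hx.1 (Ne.symm hx0)
  have hζx : ζ = ((x⁻¹ : ℝ) : ℂ) := by
    have hxc : (x : ℂ) ≠ 0 := by exact_mod_cast hx0
    have : ζ * x = 1 := by linear_combination -h
    push_cast
    field_simp
    linear_combination this
  exact hζ ⟨x⁻¹, (one_le_inv₀ hx0').2 hx.2, hζx.symm⟩

private lemma bose_lower_bound {K : Set ℂ} (hK : IsCompact K)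
    (hKU : K ⊆ (Complex.ofReal '' Set.Ici (1 : ℝ))ᶜ) :
    ∃ s > 0, ∀ ζ ∈ K, ∀ x ∈ Set.Icc (0 : ℝ) 1, s ≤ ‖(1 : ℂ) - ζ * x‖ := by
  rcases K.eq_empty_or_nonempty with rfl | hne
  · exact ⟨1, one_pos, by simp⟩
  have hC : IsCompact (K ×ˢ Set.Icc (0 : ℝ) 1) := hK.prod isCompact_Icc
  have hcont : ContinuousOn (fun p : ℂ × ℝ => ‖(1 : ℂ) - p.1 * p.2‖)
      (K ×ˢ Set.Icc (0 : ℝ) 1) :=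
    ((continuous_const.sub (continuous_fst.mul
      (Complex.continuous_ofReal.comp continuous_snd))).norm).continuousOn
  obtain ⟨p, hp, hmin⟩ := hC.exists_isMinOn (hne.prod (Set.nonempty_Icc.2 zero_le_one)) hcont
  refine ⟨‖(1 : ℂ) - p.1 * p.2‖, ?_, fun ζ hζ x hx => isMinOn_iff.1 hmin (ζ, x) (Set.mk_mem_prod hζ hx)⟩
  exact norm_pos_iff.2 (bose_ne_zero (hKU hp.1) hp.2)

private lemma bose_exp_mem {t : ℝ} (ht : t ∈ Set.Ioi (0 : ℝ)) :
    Real.exp (-t) ∈ Set.Icc (0 : ℝ) 1 :=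
  ⟨(Real.exp_pos _).le, Real.exp_le_one_iff.2 (by simpa using ht.le)⟩

private lemma bose_exp_eq (t : ℝ) :
    Complex.exp (-(t : ℂ)) = ((Real.exp (-t) : ℝ) : ℂ) := by
  rw [Complex.ofReal_exp, Complex.ofReal_neg]

private lemma bose_num_integrable {σ : ℝ} (hσ : 0 < σ) :
    IntegrableOn (fun t : ℝ => (t : ℂ) ^ ((σ : ℂ) - 1) * Complex.exp (-t))
      (Set.Ioi (0 : ℝ)) := by
  have h := Complex.GammaIntegral_convergent (s := (σ : ℂ)) (by simpa using hσ)
  refine h.congr_fun (fun t ht => ?_) measurableSet_Ioi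
  rw [bose_exp_eq, mul_comm]

private lemma bose_num_continuousOn (σ : ℝ) :
    ContinuousOn (fun t : ℝ => (t : ℂ) ^ ((σ : ℂ) - 1) * Complex.exp (-t))
      (Set.Ioi (0 : ℝ)) := by
  refine ContinuousOn.mul ?_ ((Complex.continuous_exp.comp
    (Complex.continuous_ofReal.neg)).continuousOn)
  intro t ht
  exact (Complex.continuousAt_ofReal_cpow_const t _ (Or.inr (ne_of_gt ht))).continuousWithinAt

private lemma bose_denom_continuous (ζ : ℂ) :
    Continuous (fun t : ℝ => (1 : ℂ) - ζ * Complex.exp (-t)) :=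
  continuous_const.sub (continuous_const.mul
    (Complex.continuous_exp.comp Complex.continuous_ofReal.neg))

private lemma bose_integrable_aux {σ : ℝ} (hσ : 0 < σ) (ζ : ℂ) {s : ℝ} (hs : 0 < s)
    (hb : ∀ t ∈ Set.Ioi (0 : ℝ), s ≤ ‖(1 : ℂ) - ζ * Complex.exp (-t)‖) :
    IntegrableOn (fun t : ℝ =>
      (t : ℂ) ^ ((σ : ℂ) - 1) * Complex.exp (-t) / (1 - ζ * Complex.exp (-t)))
      (Set.Ioi (0 : ℝ)) := by
  have hmeas : AEStronglyMeasurable (fun t : ℝ =>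
      (t : ℂ) ^ ((σ : ℂ) - 1) * Complex.exp (-t) / (1 - ζ * Complex.exp (-t)))
      (volume.restrict (Set.Ioi (0 : ℝ))) := by
    refine ContinuousOn.aestronglyMeasurable ?_ measurableSet_Ioi
    refine (bose_num_continuousOn σ).div (bose_denom_continuous ζ).continuousOn
      (fun t ht => ?_)
    have := hb t ht
    intro h0
    rw [h0, norm_zero] at this
    exact absurd this (not_le.2 hs)
  refine Integrable.mono' (((bose_num_integrable hσ).norm).div_const s) hmeas ?_
  filter_upwards [ae_restrict_mem measurableSet_Ioi] with t ht
  rw [norm_div]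
  gcongr
  exact hb t ht

/-- For `σ > 0`, the Bose function
`g_σ(ζ) = (ζ/Γ(σ)) ∫₀^∞ t^{σ-1} e^{-t} / (1 − ζ e^{-t}) dt`
is well defined (the integrand is integrable) and complex differentiable (analytic)
on the open set `ℂ \ [1, ∞)`. -/
theorem stmt_1 (σ : ℝ) (hσ : 0 < σ) :
    (∀ ζ : ℂ, ζ ∉ Complex.ofReal '' Set.Ici (1 : ℝ) →
      IntegrableOn (fun t : ℝ =>
        (t : ℂ) ^ ((σ : ℂ) - 1) * Complex.exp (-t) / (1 - ζ * Complex.exp (-t)))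
        (Set.Ioi (0 : ℝ))) ∧
    DifferentiableOn ℂ
      (fun ζ : ℂ => ζ / Complex.Gamma σ *
        ∫ t in Set.Ioi (0 : ℝ),
          (t : ℂ) ^ ((σ : ℂ) - 1) * Complex.exp (-t) / (1 - ζ * Complex.exp (-t)))
      (Complex.ofReal '' Set.Ici (1 : ℝ))ᶜ := by
  have key : ∀ ζ : ℂ, ζ ∉ Complex.ofReal '' Set.Ici (1 : ℝ) →
      IntegrableOn (fun t : ℝ =>
        (t : ℂ) ^ ((σ : ℂ) - 1) * Complex.exp (-t) / (1 - ζ * Complex.exp (-t)))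
        (Set.Ioi (0 : ℝ)) := by
    intro ζ hζ
    obtain ⟨s, hs, hb⟩ := bose_lower_bound (isCompact_singleton (x := ζ))
      (by simpa using hζ)
    refine bose_integrable_aux hσ ζ hs (fun t ht => ?_)
    have := hb ζ rfl (Real.exp (-t)) (bose_exp_mem ht)
    rwa [bose_exp_eq]
  refine ⟨key, ?_⟩
  have hopen : IsOpen ((Complex.ofReal '' Set.Ici (1 : ℝ))ᶜ) := bose_cut_closed.isOpen_compl
  intro ζ₀ hζ₀
  -- choose a closed ball around ζ₀
  obtain ⟨ε, hε, hball⟩ := Metric.isOpen_iff.1 hopen ζ₀ hζ₀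
  have hKsub : Metric.closedBall ζ₀ (ε / 2) ⊆ (Complex.ofReal '' Set.Ici (1 : ℝ))ᶜ :=
    fun z hz => hball (lt_of_le_of_lt (Metric.mem_closedBall.1 hz) (by linarith))
  obtain ⟨s, hs, hb⟩ := bose_lower_bound (isCompact_closedBall ζ₀ (ε / 2)) hKsub
  have hb' : ∀ ζ ∈ Metric.ball ζ₀ (ε / 2), ∀ t ∈ Set.Ioi (0 : ℝ),
      s ≤ ‖(1 : ℂ) - ζ * Complex.exp (-t)‖ := by
    intro ζ hζ t ht
    have := hb ζ (Metric.ball_subset_closedBall hζ) (Real.exp (-t)) (bose_exp_mem ht)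
    rwa [bose_exp_eq]
  set μ := volume.restrict (Set.Ioi (0 : ℝ)) with hμ
  set F : ℂ → ℝ → ℂ := fun ζ t =>
    (t : ℂ) ^ ((σ : ℂ) - 1) * Complex.exp (-t) / (1 - ζ * Complex.exp (-t)) with hF
  set F' : ℂ → ℝ → ℂ := fun ζ t =>
    (t : ℂ) ^ ((σ : ℂ) - 1) * Complex.exp (-t) * Complex.exp (-t)
      / (1 - ζ * Complex.exp (-t)) ^ 2 with hF'
  have hζ₀ball : ζ₀ ∈ Metric.ball ζ₀ (ε / 2) := Metric.mem_ball_self (by linarith)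
  have hF_meas : ∀ᶠ ζ in nhds ζ₀, AEStronglyMeasurable (F ζ) μ := by
    filter_upwards [hopen.mem_nhds hζ₀] with ζ hζ
    exact (key ζ hζ).aestronglyMeasurable
  have hF_int : Integrable (F ζ₀) μ := key ζ₀ hζ₀
  have hF'_meas : AEStronglyMeasurable (F' ζ₀) μ := by
    refine ContinuousOn.aestronglyMeasurable ?_ measurableSet_Ioi
    refine ContinuousOn.div ((bose_num_continuousOn σ).mul ((Complex.continuous_exp.comp
      Complex.continuous_ofReal.neg).continuousOn)) ((bose_denom_continuous ζ₀).pow 2).continuousOn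
      (fun t ht => ?_)
    have := hb' ζ₀ hζ₀ball t ht
    have hne : (1 : ℂ) - ζ₀ * Complex.exp (-t) ≠ 0 := by
      intro h0; rw [h0, norm_zero] at this; exact absurd this (not_le.2 hs)
    exact pow_ne_zero 2 hne
  have h_bound : ∀ᵐ t ∂μ, ∀ ζ ∈ Metric.ball ζ₀ (ε / 2), ‖F' ζ t‖ ≤
      ‖(t : ℂ) ^ ((σ : ℂ) - 1) * Complex.exp (-t)‖ / s ^ 2 := by
    filter_upwards [ae_restrict_mem measurableSet_Ioi] with t ht ζ hζ
    have hsle := hb' ζ hζ t ht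
    have hexp : ‖Complex.exp (-(t : ℂ))‖ ≤ 1 := by
      rw [bose_exp_eq, Complex.norm_real, Real.norm_eq_abs,
        abs_of_pos (Real.exp_pos _)]
      exact (bose_exp_mem ht).2
    rw [hF', norm_div, norm_mul, norm_pow]
    calc ‖(t : ℂ) ^ ((σ : ℂ) - 1) * Complex.exp (-t)‖ * ‖Complex.exp (-(t:ℂ))‖ /
          ‖(1 : ℂ) - ζ * Complex.exp (-t)‖ ^ 2
        ≤ ‖(t : ℂ) ^ ((σ : ℂ) - 1) * Complex.exp (-t)‖ * 1 / s ^ 2 := by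
          gcongr
      _ = ‖(t : ℂ) ^ ((σ : ℂ) - 1) * Complex.exp (-t)‖ / s ^ 2 := by ring
  have bound_int : Integrable
      (fun t : ℝ => ‖(t : ℂ) ^ ((σ : ℂ) - 1) * Complex.exp (-t)‖ / s ^ 2) μ :=
    ((bose_num_integrable hσ).norm).div_const _
  have h_diff : ∀ᵐ t ∂μ, ∀ ζ ∈ Metric.ball ζ₀ (ε / 2),
      HasDerivAt (fun ζ => F ζ t) (F' ζ t) ζ := by
    filter_upwards [ae_restrict_mem measurableSet_Ioi] with t ht ζ hζ
    have hsle := hb' ζ hζ t ht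
    have hne : (1 : ℂ) - ζ * Complex.exp (-t) ≠ 0 := by
      intro h0; rw [h0, norm_zero] at hsle; exact absurd hsle (not_le.2 hs)
    set c := (t : ℂ) ^ ((σ : ℂ) - 1) * Complex.exp (-(t : ℂ)) with hc
    set a := Complex.exp (-(t : ℂ)) with ha
    have hd : HasDerivAt (fun ζ : ℂ => (1 : ℂ) - ζ * a) (-a) ζ := by
      simpa using ((hasDerivAt_id ζ).mul_const a).const_sub 1
    have hinv : HasDerivAt (fun ζ : ℂ => ((1 : ℂ) - ζ * a)⁻¹)
        (a / ((1 : ℂ) - ζ * a) ^ 2) ζ := by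
      have := hd.inv hne
      refine this.congr_deriv ?_
      ring
    have := hinv.const_mul c
    simp only [hF, hF', div_eq_mul_inv]
    refine this.congr_deriv ?_
    rw [hc, ha, div_eq_mul_inv]
    ring
  have := hasDerivAt_integral_of_dominated_loc_of_deriv_le (F := F) (F' := F')
    (Metric.ball_mem_nhds ζ₀ (half_pos hε)) hF_meas hF_int hF'_meas h_bound bound_int h_diff
  have hI : DifferentiableAt ℂ (fun ζ => ∫ t, F ζ t ∂μ) ζ₀ := this.2.differentiableAt
  have hmul : DifferentiableAt ℂ (fun ζ : ℂ => ζ / Complex.Gamma σ *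
      ∫ t, F ζ t ∂μ) ζ₀ :=
    ((differentiableAt_id.div_const _)).mul hI
  exact hmul.differentiableWithinAt
end

section
/- Fix β > 0 and ω > 0, and define for real 0 < x < e^{βω/2} the infinite-volume density ρ_∞(β,x,ω) = βω (2πβ)^{-3/2} Σ_{k=0}^∞ g_{1/2}( x e^{-(k+1/2)ωβ} ). Then ρ_∞(β,x,ω) tends to +∞ as x increases to e^{βω/2}; in other words, Bose–Einstein condensation is absent at nonzero magnetic field. -/
open Real Filter

/-- Summability of the Bose series at `0 ≤ ζ < 1`. -/
lemma gsum_summable {ζ : ℝ} (h0 : 0 ≤ ζ) (h1 : ζ < 1) :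
    Summable (fun n : ℕ => ζ ^ (n + 1) / ((n : ℝ) + 1) ^ ((1/2 : ℝ))) := by
  have hgeo : Summable (fun n : ℕ => ζ ^ (n + 1)) := by
    simpa [pow_succ] using (summable_geometric_of_lt_one h0 h1).mul_right ζ
  refine hgeo.of_nonneg_of_le (fun n => ?_) (fun n => ?_)
  · positivity
  · apply div_le_self (by positivity)
    apply Real.one_le_rpow (by linarith [Nat.cast_nonneg (α := ℝ) n]) (by norm_num)

lemma gsum_nonneg {ζ : ℝ} (h0 : 0 ≤ ζ) :
    0 ≤ ∑' n : ℕ, ζ ^ (n + 1) / ((n : ℝ) + 1) ^ ((1/2 : ℝ)) :=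
  tsum_nonneg fun n => by positivity

lemma gsum_le {ζ : ℝ} (h0 : 0 ≤ ζ) (h1 : ζ < 1) :
    ∑' n : ℕ, ζ ^ (n + 1) / ((n : ℝ) + 1) ^ ((1/2 : ℝ)) ≤ ζ * (1 - ζ)⁻¹ := by
  have hgeo : Summable (fun n : ℕ => ζ ^ (n + 1)) := by
    simpa [pow_succ] using (summable_geometric_of_lt_one h0 h1).mul_right ζ
  have h2 : ∑' n : ℕ, ζ ^ (n + 1) = ζ * (1 - ζ)⁻¹ := by
    calc ∑' n : ℕ, ζ ^ (n + 1) = ∑' n : ℕ, ζ ^ n * ζ := by simp [pow_succ]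
    _ = (1 - ζ)⁻¹ * ζ := by rw [tsum_mul_right, tsum_geometric_of_lt_one h0 h1]
    _ = ζ * (1 - ζ)⁻¹ := mul_comm _ _
  rw [← h2]
  refine Summable.tsum_le_tsum (fun n => ?_) (gsum_summable h0 h1) hgeo
  apply div_le_self (by positivity)
  apply Real.one_le_rpow (by linarith [Nat.cast_nonneg (α := ℝ) n]) (by norm_num)

/-- The Bose function `g_{1/2}` diverges as `ζ → 1⁻`. -/
lemma gsum_tendsto :
    Tendsto (fun ζ : ℝ => ∑' n : ℕ, ζ ^ (n + 1) / ((n : ℝ) + 1) ^ ((1/2 : ℝ)))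
      (nhdsWithin 1 (Set.Ico 0 1)) atTop := by
  rw [tendsto_atTop]
  intro C
  -- the series `∑ 1/√(n+1)` diverges
  have hns : ¬ Summable (fun n : ℕ => 1 / ((n : ℝ) + 1) ^ ((1/2 : ℝ))) := by
    have := (Real.summable_one_div_nat_rpow (p := (1/2 : ℝ))).not.mpr (by norm_num)
    intro h
    apply this
    rw [← summable_nat_add_iff 1]
    refine h.congr fun n => ?_
    push_cast
    ring_nf
  have hdiv : Tendsto (fun N => ∑ n ∈ Finset.range N, 1 / ((n : ℝ) + 1) ^ ((1/2 : ℝ)))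
      atTop atTop := by
    rw [← not_summable_iff_tendsto_nat_atTop_of_nonneg (fun n => by positivity)]
    exact hns
  obtain ⟨N, hN⟩ := (hdiv.eventually_ge_atTop (C + 1)).exists
  -- the partial sum is continuous and equals at least `C+1` at `ζ = 1`
  have hcont : ContinuousAt
      (fun ζ : ℝ => ∑ n ∈ Finset.range N, ζ ^ (n + 1) / ((n : ℝ) + 1) ^ ((1/2 : ℝ))) 1 :=
    (continuous_finset_sum _ fun n _ => (continuous_pow _).div_const _).continuousAt
  have hval : C < ∑ n ∈ Finset.range N, (1 : ℝ) ^ (n + 1) / ((n : ℝ) + 1) ^ ((1/2 : ℝ)) := by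
    have : ∑ n ∈ Finset.range N, (1 : ℝ) ^ (n + 1) / ((n : ℝ) + 1) ^ ((1/2 : ℝ))
        = ∑ n ∈ Finset.range N, 1 / ((n : ℝ) + 1) ^ ((1/2 : ℝ)) := by
      simp
    rw [this]; linarith
  have hev : ∀ᶠ ζ : ℝ in nhds 1,
      C < ∑ n ∈ Finset.range N, ζ ^ (n + 1) / ((n : ℝ) + 1) ^ ((1/2 : ℝ)) :=
    continuousAt_const.eventually_lt hcont hval
  filter_upwards [nhdsWithin_le_nhds hev, self_mem_nhdsWithin] with ζ h1 h2
  refine le_trans h1.le ?_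
  exact Summable.sum_le_tsum _ (fun n _ => div_nonneg (pow_nonneg h2.1 _) (Real.rpow_nonneg (by positivity) _)) (gsum_summable h2.1 h2.2)

/-- Absence of Bose–Einstein condensation at nonzero magnetic field: the
infinite-volume density
`ρ_∞(β,x,ω) = βω (2πβ)^{-3/2} Σ_{k≥0} g_{1/2}( x e^{-(k+1/2)ωβ} )`,
with `g_{1/2}(ζ) = Σ_{n≥1} ζⁿ/n^{1/2}`, tends to `+∞` as `x` increases to
`e^{βω/2}` through `(0, e^{βω/2})`. -/
theorem stmt_4 (β ω : ℝ) (hβ : 0 < β) (hω : 0 < ω) :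
    Tendsto
      (fun x : ℝ => β * ω * (2 * π * β) ^ (-(3/2) : ℝ) *
        ∑' k : ℕ, ∑' n : ℕ,
          (x * Real.exp (-(((k : ℝ) + 1/2)) * ω * β)) ^ (n + 1) /
            ((n : ℝ) + 1) ^ ((1/2 : ℝ)))
      (nhdsWithin (Real.exp (β * ω / 2)) (Set.Ioo 0 (Real.exp (β * ω / 2))))
      atTop := by
  set L := Real.exp (β * ω / 2) with hLdef
  set c := β * ω * (2 * π * β) ^ (-(3/2) : ℝ) with hcdef
  have hc : 0 < c := by
    apply mul_pos (mul_pos hβ hω)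
    exact Real.rpow_pos_of_pos (by positivity) _
  -- ζ x k
  set ζ : ℝ → ℕ → ℝ := fun x k => x * Real.exp (-(((k : ℝ) + 1/2)) * ω * β) with hζdef
  have hζ0lt : ∀ x ∈ Set.Ioo 0 L, ζ x 0 < 1 := by
    intro x hx
    have : ζ x 0 < L * Real.exp (-(((0:ℕ) : ℝ) + 1/2) * ω * β) :=
      mul_lt_mul_of_pos_right hx.2 (Real.exp_pos _)
    apply this.trans_le
    rw [hLdef, ← Real.exp_add]
    apply le_of_eq
    rw [show β * ω / 2 + -(((0:ℕ) : ℝ) + 1/2) * ω * β = 0 by push_cast; ring, Real.exp_zero]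
  have hζpos : ∀ x ∈ Set.Ioo 0 L, ∀ k : ℕ, 0 < ζ x k := fun x hx k =>
    mul_pos hx.1 (Real.exp_pos _)
  have hζle : ∀ x ∈ Set.Ioo 0 L, ∀ k : ℕ, ζ x k ≤ ζ x 0 * Real.exp (-(ω * β)) ^ k := by
    intro x hx k
    apply le_of_eq
    simp only [hζdef, ← Real.exp_nat_mul, mul_assoc, ← Real.exp_add]
    congr 2
    push_cast
    ring
  have hζlt : ∀ x ∈ Set.Ioo 0 L, ∀ k : ℕ, ζ x k < 1 := by
    intro x hx k
    refine lt_of_le_of_lt (hζle x hx k) ?_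
    calc ζ x 0 * Real.exp (-(ω * β)) ^ k ≤ ζ x 0 * 1 := by
          apply mul_le_mul_of_nonneg_left _ (hζpos x hx 0).le
          apply pow_le_one₀ (Real.exp_pos _).le
          rw [Real.exp_le_one_iff]
          nlinarith
    _ = ζ x 0 := mul_one _
    _ < 1 := hζ0lt x hx
  -- the sum over k is bounded below by the k = 0 term
  have hsummable : ∀ x ∈ Set.Ioo 0 L, Summable (fun k : ℕ =>
      ∑' n : ℕ, ζ x k ^ (n + 1) / ((n : ℝ) + 1) ^ ((1/2 : ℝ))) := by
    intro x hx
    have hr : Real.exp (-(ω * β)) < 1 := by rw [Real.exp_lt_one_iff]; nlinarith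
    have h01 : 0 < 1 - ζ x 0 := by linarith [hζ0lt x hx]
    have hbig : Summable (fun k : ℕ =>
        (1 - ζ x 0)⁻¹ * (ζ x 0 * Real.exp (-(ω * β)) ^ k)) :=
      (((summable_geometric_of_lt_one (Real.exp_pos _).le hr).mul_left
        (ζ x 0)).mul_left _)
    refine hbig.of_nonneg_of_le (fun k => gsum_nonneg (hζpos x hx k).le) (fun k => ?_)
    have hk0 : ζ x k ≤ ζ x 0 * Real.exp (-(ω * β)) ^ k := hζle x hx k
    have hrk : (0:ℝ) < Real.exp (-(ω * β)) ^ k := pow_pos (Real.exp_pos _) _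
    have hk1 : ζ x 0 * Real.exp (-(ω * β)) ^ k ≤ ζ x 0 :=
      mul_le_of_le_one_right (hζpos x hx 0).le
        (pow_le_one₀ (Real.exp_pos _).le hr.le)
    calc ∑' n : ℕ, ζ x k ^ (n + 1) / ((n : ℝ) + 1) ^ ((1/2 : ℝ))
        ≤ ζ x k * (1 - ζ x k)⁻¹ := gsum_le (hζpos x hx k).le (hζlt x hx k)
      _ ≤ (ζ x 0 * Real.exp (-(ω * β)) ^ k) * (1 - ζ x 0)⁻¹ :=
          mul_le_mul hk0 (inv_anti₀ h01 (by linarith))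
            (inv_nonneg.mpr (by linarith [hζlt x hx k]))
            (mul_nonneg (hζpos x hx 0).le hrk.le)
      _ = (1 - ζ x 0)⁻¹ * (ζ x 0 * Real.exp (-(ω * β)) ^ k) := by ring
  -- tendsto of the k = 0 term
  have hmap : Tendsto (fun x : ℝ => ζ x 0) (nhdsWithin L (Set.Ioo 0 L))
      (nhdsWithin 1 (Set.Ico 0 1)) := by
    apply tendsto_nhdsWithin_of_tendsto_nhds_of_eventually_within
    · have hcont : Tendsto (fun x : ℝ => ζ x 0) (nhds L) (nhds (ζ L 0)) :=
        (continuous_mul_right _).tendsto L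
      have : ζ L 0 = 1 := by
        rw [hζdef, hLdef]
        simp only
        rw [← Real.exp_add, show β * ω / 2 + -(((0:ℕ) : ℝ) + 1/2) * ω * β = 0 by
          push_cast; ring, Real.exp_zero]
      rw [this] at hcont
      exact hcont.mono_left nhdsWithin_le_nhds
    · filter_upwards [self_mem_nhdsWithin] with x hx
      exact ⟨(hζpos x hx 0).le, hζ0lt x hx⟩
  have h0 : Tendsto (fun x : ℝ => ∑' n : ℕ, ζ x 0 ^ (n + 1) / ((n : ℝ) + 1) ^ ((1/2 : ℝ)))
      (nhdsWithin L (Set.Ioo 0 L)) atTop := gsum_tendsto.comp hmap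
  have hT : Tendsto (fun x : ℝ => ∑' k : ℕ, ∑' n : ℕ,
      ζ x k ^ (n + 1) / ((n : ℝ) + 1) ^ ((1/2 : ℝ))) (nhdsWithin L (Set.Ioo 0 L)) atTop := by
    apply tendsto_atTop_mono' _ _ h0
    filter_upwards [self_mem_nhdsWithin] with x hx
    exact Summable.le_tsum (hsummable x hx) 0 (fun k _ => gsum_nonneg (hζpos x hx k).le)
  exact hT.const_mul_atTop hc
end

section
/- Fix β > 0 and ω > 0, and define ρ_∞(β,x,ω) = βω (2πβ)^{-3/2} Σ_{k=0}^∞ g_{1/2}( x e^{-(k+1/2)ωβ} ) for real 0 < x < e^{βω/2}. Then x ↦ ρ_∞(β,x,ω) is continuous and strictly increasing on (0, e^{βω/2}), tends to 0 as x → 0⁺ and to +∞ as x → e^{βω/2}⁻; consequently, for every ρ > 0 there exists a unique x_∞(β,ρ,ω) ∈ (0, e^{βω/2}) such that ρ_∞(β, x_∞(β,ρ,ω), ω) = ρ. -/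
open Real Filter

noncomputable def stmt5Fn (β ω x : ℝ) (p : ℕ × ℕ) : ℝ :=
  (x * Real.exp (-(((p.1 : ℝ) + 1/2)) * ω * β)) ^ (p.2 + 1) / ((p.2 : ℝ) + 1) ^ ((1/2 : ℝ))

lemma stmt5Fn_nonneg (β ω x : ℝ) (hx : 0 ≤ x) (p : ℕ × ℕ) : 0 ≤ stmt5Fn β ω x p := by
  unfold stmt5Fn
  have h1 : (0:ℝ) ≤ x * Real.exp (-(((p.1 : ℝ) + 1/2)) * ω * β) :=
    mul_nonneg hx (Real.exp_nonneg _)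
  positivity

lemma stmt5Fn_bound (β ω : ℝ) (hβ : 0 < β) (hω : 0 < ω) {b : ℝ} (hb0 : 0 ≤ b)
    (x : ℝ) (hx : |x| ≤ b) (p : ℕ × ℕ) :
    ‖stmt5Fn β ω x p‖ ≤ Real.exp (-(ω * β)) ^ p.1 * (b * Real.exp (-(ω * β) / 2)) ^ (p.2 + 1) := by
  obtain ⟨k, n⟩ := p
  set q := Real.exp (-(ω * β)) with hq
  have hq0 : 0 ≤ q := Real.exp_nonneg _
  have hq1 : q ≤ 1 := Real.exp_le_one_iff.mpr (by nlinarith)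
  have hE : Real.exp (-(((k : ℝ) + 1/2)) * ω * β) = Real.exp (-(ω * β) / 2) * q ^ k := by
    rw [hq, ← Real.exp_nat_mul, ← Real.exp_add]
    ring_nf
  have hd1 : (1:ℝ) ≤ ((n : ℝ) + 1) ^ ((1/2 : ℝ)) := by
    have h := Real.rpow_le_rpow (x := 1) (y := (n:ℝ)+1) (z := (1/2:ℝ)) zero_le_one
      (by have := Nat.cast_nonneg (α := ℝ) n; linarith) (by norm_num)
    simpa using h
  have hd0 : (0:ℝ) < ((n : ℝ) + 1) ^ ((1/2 : ℝ)) := lt_of_lt_of_le one_pos hd1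
  have h1 : ‖stmt5Fn β ω x (k, n)‖
      = (|x| * Real.exp (-(((k : ℝ) + 1/2)) * ω * β)) ^ (n + 1) / ((n : ℝ) + 1) ^ ((1/2 : ℝ)) := by
    unfold stmt5Fn
    rw [Real.norm_eq_abs, abs_div, abs_pow, abs_mul, abs_of_pos (Real.exp_pos _),
      abs_of_pos hd0]
  rw [h1]
  have h2 : (|x| * Real.exp (-(((k : ℝ) + 1/2)) * ω * β)) ^ (n + 1)
      ≤ (b * Real.exp (-(ω * β) / 2)) ^ (n + 1) * q ^ k := by
    have hxe : |x| * Real.exp (-(((k : ℝ) + 1/2)) * ω * β)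
        ≤ b * Real.exp (-(ω * β) / 2) * q ^ k := by
      rw [hE, ← mul_assoc]
      exact mul_le_mul_of_nonneg_right (mul_le_mul_of_nonneg_right hx (Real.exp_nonneg _))
        (pow_nonneg hq0 _)
    calc (|x| * Real.exp (-(((k : ℝ) + 1/2)) * ω * β)) ^ (n + 1)
        ≤ (b * Real.exp (-(ω * β) / 2) * q ^ k) ^ (n + 1) :=
          pow_le_pow_left₀ (mul_nonneg (abs_nonneg _) (Real.exp_nonneg _)) hxe _
      _ = (b * Real.exp (-(ω * β) / 2)) ^ (n + 1) * (q ^ k) ^ (n + 1) := mul_pow _ _ _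
      _ ≤ (b * Real.exp (-(ω * β) / 2)) ^ (n + 1) * (q ^ k) ^ 1 := by
          apply mul_le_mul_of_nonneg_left
            (pow_le_pow_of_le_one (pow_nonneg hq0 _) (pow_le_one₀ hq0 hq1) (by omega))
            (pow_nonneg (mul_nonneg hb0 (Real.exp_nonneg _)) _)
      _ = (b * Real.exp (-(ω * β) / 2)) ^ (n + 1) * q ^ k := by rw [pow_one]
  calc (|x| * Real.exp (-(((k : ℝ) + 1/2)) * ω * β)) ^ (n + 1) / ((n : ℝ) + 1) ^ ((1/2 : ℝ))
      ≤ (|x| * Real.exp (-(((k : ℝ) + 1/2)) * ω * β)) ^ (n + 1) / 1 := by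
        apply div_le_div_of_nonneg_left ?_ ?_ hd1 <;>
          first
            | exact pow_nonneg (mul_nonneg (abs_nonneg _) (Real.exp_nonneg _)) _
            | exact one_pos
    _ = (|x| * Real.exp (-(((k : ℝ) + 1/2)) * ω * β)) ^ (n + 1) := div_one _
    _ ≤ (b * Real.exp (-(ω * β) / 2)) ^ (n + 1) * q ^ k := h2
    _ = q ^ k * (b * Real.exp (-(ω * β) / 2)) ^ (n + 1) := mul_comm _ _

set_option maxHeartbeats 1000000 in
lemma stmt5_summable_M (β ω : ℝ) (hβ : 0 < β) (hω : 0 < ω) {b : ℝ} (hb0 : 0 ≤ b)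
    (hbR : b < Real.exp (β * ω / 2)) :
    Summable (fun p : ℕ × ℕ =>
      Real.exp (-(ω * β)) ^ p.1 * (b * Real.exp (-(ω * β) / 2)) ^ (p.2 + 1)) := by
  have hq1 : Real.exp (-(ω * β)) < 1 := Real.exp_lt_one_iff.mpr (by nlinarith)
  have hζ0 : 0 ≤ b * Real.exp (-(ω * β) / 2) := mul_nonneg hb0 (Real.exp_nonneg _)
  have hζ1 : b * Real.exp (-(ω * β) / 2) < 1 := by
    have h := mul_lt_mul_of_pos_right hbR (Real.exp_pos (-(ω * β) / 2))
    rwa [← Real.exp_add, show β * ω / 2 + -(ω * β) / 2 = 0 by ring, Real.exp_zero] at h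
  have hf : Summable (fun k : ℕ => Real.exp (-(ω * β)) ^ k) :=
    summable_geometric_of_lt_one (Real.exp_nonneg _) hq1
  have hg : Summable (fun n : ℕ => (b * Real.exp (-(ω * β) / 2)) ^ (n + 1)) := by
    simpa [pow_succ] using
      (summable_geometric_of_lt_one hζ0 hζ1).mul_right (b * Real.exp (-(ω * β) / 2))
  exact hf.mul_of_nonneg hg (fun k => pow_nonneg (Real.exp_nonneg _) _)
    (fun n => pow_nonneg hζ0 _)

lemma stmt5_summable (β ω : ℝ) (hβ : 0 < β) (hω : 0 < ω) {b : ℝ} (hb0 : 0 ≤ b)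
    (hbR : b < Real.exp (β * ω / 2)) (x : ℝ) (hx : |x| ≤ b) :
    Summable (stmt5Fn β ω x) :=
  Summable.of_norm_bounded (stmt5_summable_M β ω hβ hω hb0 hbR)
    (stmt5Fn_bound β ω hβ hω hb0 x hx)

lemma stmt5_contOn (β ω : ℝ) (hβ : 0 < β) (hω : 0 < ω) {b : ℝ} (hb0 : 0 ≤ b)
    (hbR : b < Real.exp (β * ω / 2)) :
    ContinuousOn (fun x => ∑' p : ℕ × ℕ, stmt5Fn β ω x p) (Set.Icc (-b) b) := by
  apply continuousOn_tsum (fun p => ?_) (stmt5_summable_M β ω hβ hω hb0 hbR)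
    (fun p x hx => stmt5Fn_bound β ω hβ hω hb0 x (abs_le.mpr ⟨hx.1, hx.2⟩) p)
  exact ((continuous_mul_right _).pow _).div_const _ |>.continuousOn

/-- The infinite-volume density
`ρ_∞(β,x,ω) = βω (2πβ)^{-3/2} Σ_{k≥0} g_{1/2}( x e^{-(k+1/2)ωβ} )`,
with `g_{1/2}(ζ) = Σ_{n≥1} ζⁿ/n^{1/2}`, is continuous and strictly increasing on
`(0, e^{βω/2})`, tends to `0` as `x → 0⁺` and to `+∞` as `x → e^{βω/2}⁻`;
consequently for every `ρ > 0` there is a unique `x_∞ ∈ (0, e^{βω/2})` with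
`ρ_∞(β, x_∞, ω) = ρ`. -/
theorem stmt_5 (β ω : ℝ) (hβ : 0 < β) (hω : 0 < ω) (ρinf : ℝ → ℝ)
    (hρinf : ∀ x : ℝ, ρinf x = β * ω * (2 * π * β) ^ (-(3/2) : ℝ) *
      ∑' k : ℕ, ∑' n : ℕ,
        (x * Real.exp (-(((k : ℝ) + 1/2)) * ω * β)) ^ (n + 1) /
          ((n : ℝ) + 1) ^ ((1/2 : ℝ))) :
    ContinuousOn ρinf (Set.Ioo 0 (Real.exp (β * ω / 2))) ∧
    StrictMonoOn ρinf (Set.Ioo 0 (Real.exp (β * ω / 2))) ∧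
    Tendsto ρinf (nhdsWithin 0 (Set.Ioi 0)) (nhds 0) ∧
    Tendsto ρinf
      (nhdsWithin (Real.exp (β * ω / 2)) (Set.Ioo 0 (Real.exp (β * ω / 2)))) atTop ∧
    ∀ ρ : ℝ, 0 < ρ →
      ∃! x : ℝ, x ∈ Set.Ioo 0 (Real.exp (β * ω / 2)) ∧ ρinf x = ρ := by
  set R := Real.exp (β * ω / 2) with hR
  have hR0 : 0 < R := Real.exp_pos _
  set C := β * ω * (2 * π * β) ^ (-(3/2) : ℝ) with hCdef
  have hC : 0 < C := by
    apply mul_pos (mul_pos hβ hω)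
    exact Real.rpow_pos_of_pos (by positivity) _
  have hrw : ∀ x : ℝ, Summable (stmt5Fn β ω x) →
      ρinf x = C * ∑' p : ℕ × ℕ, stmt5Fn β ω x p := by
    intro x hx
    rw [hρinf x, Summable.tsum_prod hx]
    rfl
  -- continuity at points of [0, R)
  have hca : ∀ x₀ ∈ Set.Ico 0 R, ContinuousAt ρinf x₀ := by
    intro x₀ hx₀
    set b := (x₀ + R) / 2 with hbdef
    have hb0 : 0 ≤ b := by have := hx₀.1; positivity
    have hbR : b < R := by have := hx₀.2; rw [hbdef]; linarith
    have hmem : Set.Icc (-b) b ∈ nhds x₀ := by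
      apply Icc_mem_nhds
      · have := hx₀.1; have : 0 < b := by rw [hbdef]; linarith
        linarith [hx₀.1]
      · rw [hbdef]; linarith [hx₀.2]
    have hcg : ContinuousAt (fun x => C * ∑' p : ℕ × ℕ, stmt5Fn β ω x p) x₀ :=
      continuousAt_const.mul ((stmt5_contOn β ω hβ hω hb0 hbR).continuousAt hmem)
    apply hcg.congr
    apply Filter.eventuallyEq_of_mem hmem
    intro x hx
    exact (hrw x (stmt5_summable β ω hβ hω hb0 hbR x (abs_le.mpr ⟨hx.1, hx.2⟩))).symm
  have hcont : ContinuousOn ρinf (Set.Ioo 0 R) := fun x hx =>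
    (hca x ⟨hx.1.le, hx.2⟩).continuousWithinAt
  -- strict monotonicity
  have hmono : StrictMonoOn ρinf (Set.Ioo 0 R) := by
    intro x hx y hy hxy
    have hsx : Summable (stmt5Fn β ω x) :=
      stmt5_summable β ω hβ hω hy.1.le hy.2 x (by rw [abs_of_pos hx.1]; exact hxy.le)
    have hsy : Summable (stmt5Fn β ω y) :=
      stmt5_summable β ω hβ hω hy.1.le hy.2 y (by rw [abs_of_pos hy.1])
    rw [hrw x hsx, hrw y hsy]
    apply mul_lt_mul_of_pos_left ?_ hC
    apply Summable.tsum_lt_tsum (i := ((0 : ℕ), (0 : ℕ))) ?_ ?_ hsx hsy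
    · intro p
      unfold stmt5Fn
      gcongr <;> first
        | exact mul_nonneg hx.1.le (Real.exp_nonneg _)
        | exact mul_le_mul_of_nonneg_right hxy.le (Real.exp_nonneg _)
    · unfold stmt5Fn
      simp only [Nat.cast_zero, pow_one, zero_add, Real.one_rpow, div_one]
      exact mul_lt_mul_of_pos_right hxy (Real.exp_pos _)
  -- limit at 0
  have hz : stmt5Fn β ω 0 = fun _ => 0 := by
    funext p; unfold stmt5Fn; rw [zero_mul, zero_pow (Nat.succ_ne_zero _), zero_div]
  have h00 : ρinf 0 = 0 := by
    rw [hrw 0 (by rw [hz]; exact summable_zero), hz, tsum_zero, mul_zero]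
  have ht0 : Tendsto ρinf (nhdsWithin 0 (Set.Ioi 0)) (nhds 0) := by
    have h := (hca 0 ⟨le_refl 0, hR0⟩).tendsto
    rw [h00] at h
    exact h.mono_left nhdsWithin_le_nhds
  -- divergence at R
  have hdiv : Tendsto (fun N => ∑ n ∈ Finset.range N, 1 / ((n : ℝ) + 1) ^ ((1/2 : ℝ)))
      atTop atTop := by
    apply (not_summable_iff_tendsto_nat_atTop_of_nonneg (fun n => by positivity)).mp
    intro hS
    have h1 : Summable (fun n : ℕ => 1 / ((n : ℝ)) ^ ((1/2 : ℝ))) := by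
      apply (summable_nat_add_iff 1).mp
      convert hS using 2 with n
      · rfl
      push_cast
      ring_nf
    rw [Real.summable_one_div_nat_rpow] at h1
    norm_num at h1
  have htop : Tendsto ρinf (nhdsWithin R (Set.Ioo 0 R)) atTop := by
    rw [tendsto_atTop]
    intro M
    obtain ⟨N, hN⟩ : ∃ N, M + 1 ≤ C * ∑ n ∈ Finset.range N, 1 / ((n : ℝ) + 1) ^ ((1/2 : ℝ)) := by
      have h := hdiv.const_mul_atTop hC
      exact (h.eventually_ge_atTop (M + 1)).exists
    set g : ℝ → ℝ := fun x => C * ∑ n ∈ Finset.range N, stmt5Fn β ω x (0, n) with hg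
    have hgcont : Continuous g := by
      apply continuous_const.mul
      apply continuous_finset_sum
      intro i _
      exact (((continuous_mul_right _).pow _).div_const _)
    have hgR : g R = C * ∑ n ∈ Finset.range N, 1 / ((n : ℝ) + 1) ^ ((1/2 : ℝ)) := by
      simp only [hg]
      congr 1
      apply Finset.sum_congr rfl
      intro n _
      unfold stmt5Fn
      have h1 : R * Real.exp (-(((0 : ℕ) : ℝ) + 1/2) * ω * β) = 1 := by
        rw [hR, ← Real.exp_add]
        norm_num
        ring_nf
      rw [h1, one_pow]
    have hev1 : ∀ᶠ x in nhdsWithin R (Set.Ioo 0 R), M < g x := by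
      have h := hgcont.continuousAt (x := R)
      have hMlt : M < g R := by rw [hgR]; linarith
      exact (h.eventually (eventually_gt_nhds hMlt)).filter_mono nhdsWithin_le_nhds
    have hev2 : ∀ᶠ x in nhdsWithin R (Set.Ioo 0 R), x ∈ Set.Ioo 0 R :=
      eventually_mem_nhdsWithin
    filter_upwards [hev1, hev2] with x h1 h2
    have hsx : Summable (stmt5Fn β ω x) :=
      stmt5_summable β ω hβ hω h2.1.le h2.2 x (le_of_eq (abs_of_pos h2.1))
    have hkey : g x ≤ ρinf x := by
      rw [hrw x hsx, hg]
      apply mul_le_mul_of_nonneg_left ?_ hC.le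
      calc ∑ n ∈ Finset.range N, stmt5Fn β ω x (0, n)
          = ∑ p ∈ {0} ×ˢ Finset.range N, stmt5Fn β ω x p := by
            rw [Finset.sum_product, Finset.sum_singleton]
        _ ≤ ∑' p : ℕ × ℕ, stmt5Fn β ω x p :=
            Summable.sum_le_tsum _ (fun p _ => stmt5Fn_nonneg β ω x h2.1.le p) hsx
    linarith
  refine ⟨hcont, hmono, ht0, htop, ?_⟩
  intro ρ hρ
  have hev0 : ∀ᶠ x in nhdsWithin 0 (Set.Ioi 0), ρinf x < ρ :=
    ht0.eventually (eventually_lt_nhds hρ)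
  have hevR : ∀ᶠ x in nhdsWithin 0 (Set.Ioi 0), x < R :=
    (eventually_lt_nhds hR0).filter_mono nhdsWithin_le_nhds
  obtain ⟨a, haρ, haR, ha0⟩ :=
    (hev0.and (hevR.and eventually_mem_nhdsWithin)).exists
  have haIoo : a ∈ Set.Ioo 0 R := ⟨ha0, haR⟩
  haveI : (nhdsWithin R (Set.Ioo 0 R)).NeBot := right_nhdsWithin_Ioo_neBot hR0
  obtain ⟨b, hbρ, hbmem⟩ := ((htop.eventually_ge_atTop ρ).and eventually_mem_nhdsWithin).exists
  have hab : a < b := by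
    rcases lt_trichotomy a b with h | h | h
    · exact h
    · exfalso; rw [h] at haρ; linarith
    · exfalso; have := hmono hbmem haIoo h; linarith
  have hIcc : Set.Icc a b ⊆ Set.Ioo 0 R := fun z hz =>
    ⟨lt_of_lt_of_le haIoo.1 hz.1, lt_of_le_of_lt hz.2 hbmem.2⟩
  obtain ⟨x, hxmem, hxeq⟩ :=
    intermediate_value_Icc hab.le (hcont.mono hIcc) ⟨haρ.le, hbρ⟩
  refine ⟨x, ⟨hIcc hxmem, hxeq⟩, ?_⟩
  rintro y ⟨hymem, hyeq⟩
  exact hmono.injOn hymem (hIcc hxmem) (hyeq.trans hxeq.symm)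
end

section
/- There exists a numerical constant c > 0 such that for all L ≥ 1, all β > 0 and all x, x' ∈ (−L/2, L/2): Σ_{m∈ℤ} exp( −(x+x'−(2m+1)L)²/(4β) ) ≤ c (1+β) exp( −(x−x')²/(4β) ). -/
open Real

/-- Pointwise bound: each mirror-image term is controlled by the diagonal
Gaussian times a decaying factor. -/
lemma stmt_9_key (L β x x' : ℝ) (m : ℤ) (hL : 1 ≤ L) (hβ : 0 < β)
    (hx1 : -(L / 2) < x) (hx2 : x < L / 2)
    (hx1' : -(L / 2) < x') (hx2' : x' < L / 2) :
    Real.exp (-(x + x' - (2 * m + 1) * L) ^ 2 / (4 * β))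
      ≤ Real.exp (-(x - x') ^ 2 / (4 * β)) *
        Real.exp (-(max (|(m : ℝ)| - 1) 0) / β) := by
  set N : ℝ := max (|(m : ℝ)| - 1) 0 with hN
  have hN0 : 0 ≤ N := le_max_right _ _
  have hL0 : (0 : ℝ) < L := lt_of_lt_of_le one_pos hL
  have hL2 : 1 ≤ L ^ 2 := by nlinarith
  -- N ≤ N ^ 2 since N is a nonnegative integer value
  have hNsq : N ≤ N ^ 2 := by
    rcases le_or_gt (|(m : ℝ)|) 1 with h | h
    · have : N = 0 := max_eq_right (by linarith)
      rw [this]; norm_num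
    · have hm2 : (2 : ℝ) ≤ |(m : ℝ)| := by
        have : (1 : ℤ) < |m| := by
          have := h
          rw [← Int.cast_abs] at this
          exact_mod_cast this
        have : (2 : ℤ) ≤ |m| := this
        calc (2 : ℝ) = ((2 : ℤ) : ℝ) := by norm_num
          _ ≤ ((|m| : ℤ) : ℝ) := by exact_mod_cast this
          _ = |(m : ℝ)| := by push_cast; ring
      have h1N : 1 ≤ N := by
        rw [hN]; exact le_max_of_le_left (by linarith)
      nlinarith
  -- Main geometric inequality
  have hmain : (x - x') ^ 2 + 4 * N ≤ (x + x' - (2 * m + 1) * L) ^ 2 := by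
    have step : (x - x') ^ 2 + 4 * L ^ 2 * N ^ 2 ≤ (x + x' - (2 * m + 1) * L) ^ 2 := by
      rcases le_or_gt 0 m with hm | hm
      · -- m ≥ 0 : |m| = m, N ≤ m
        have hm0 : (0 : ℝ) ≤ (m : ℝ) := by exact_mod_cast hm
        have habs : |(m : ℝ)| = (m : ℝ) := abs_of_nonneg hm0
        have hNm : N ≤ (m : ℝ) := by
          rw [hN, habs]; exact max_le (by linarith) hm0
        have hN2m : N ^ 2 ≤ (m : ℝ) ^ 2 := by nlinarith
        have hA : (x - x') ^ 2 ≤ (L - x - x') ^ 2 :=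
          sq_le_sq' (by linarith) (by linarith)
        have hsum0 : 0 ≤ L - x - x' := by linarith
        nlinarith [mul_nonneg (mul_nonneg hm0 hL0.le) hsum0,
          mul_nonneg (sq_nonneg L) (sub_nonneg.mpr hN2m)]
      · -- m ≤ -1 : |m| = -m, N = -m - 1
        have hm1 : m ≤ -1 := by omega
        have hm0 : (m : ℝ) ≤ -1 := by exact_mod_cast hm1
        have habs : |(m : ℝ)| = -(m : ℝ) := abs_of_neg (by linarith)
        have hNe : N = -(m : ℝ) - 1 := by
          rw [hN, habs]; exact max_eq_left (by linarith)
        have hB : (x - x') ^ 2 ≤ (x + x' + L) ^ 2 :=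
          sq_le_sq' (by linarith) (by linarith)
        have hp0 : (0 : ℝ) ≤ -(m : ℝ) - 1 := by linarith
        have hsum0 : 0 ≤ x + x' + L := by linarith
        rw [hNe]
        nlinarith [mul_nonneg (mul_nonneg hp0 hL0.le) hsum0]
    nlinarith [mul_nonneg (sub_nonneg.mpr hL2) (sq_nonneg N), sq_nonneg N]
  rw [← Real.exp_add]
  apply Real.exp_le_exp.mpr
  have h4β : (0 : ℝ) < 4 * β := by linarith
  have : -(x - x') ^ 2 / (4 * β) + -N / β = (-(x - x') ^ 2 - 4 * N) / (4 * β) := by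
    field_simp; ring
  rw [this]
  exact (div_le_div_iff_of_pos_right h4β).mpr (by linarith)

/-- Summation estimate for the reflected (mirror) image terms of the
method-of-images Dirichlet heat kernel on `(−L/2, L/2)`. -/
theorem stmt_9 :
    ∃ c : ℝ, 0 < c ∧ ∀ (L β x x' : ℝ), 1 ≤ L → 0 < β →
      x ∈ Set.Ioo (-(L / 2)) (L / 2) → x' ∈ Set.Ioo (-(L / 2)) (L / 2) →
        ∑' m : ℤ, Real.exp (-(x + x' - (2 * m + 1) * L) ^ 2 / (4 * β))
          ≤ c * (1 + β) * Real.exp (-(x - x') ^ 2 / (4 * β)) := by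
  refine ⟨3, by norm_num, fun L β x x' hL hβ hx hx' => ?_⟩
  obtain ⟨hx1, hx2⟩ := hx
  obtain ⟨hx1', hx2'⟩ := hx'
  set E : ℝ := Real.exp (-(x - x') ^ 2 / (4 * β)) with hE
  have hE0 : 0 < E := Real.exp_pos _
  set r : ℝ := Real.exp (-(1 / β)) with hr
  have hr0 : (0 : ℝ) < r := Real.exp_pos _
  have hr1 : r < 1 := by
    rw [hr, Real.exp_lt_one_iff]
    have : (0 : ℝ) < 1 / β := by positivity
    linarith
  set G : ℤ → ℝ := fun m => Real.exp (-(max (|(m : ℝ)| - 1) 0) / β) with hG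
  have hgeo : HasSum (fun n : ℕ => r ^ n) (1 - r)⁻¹ :=
    hasSum_geometric_of_lt_one hr0.le hr1
  have hshift : ∀ n : ℕ, Real.exp (-(n : ℝ) / β) = r ^ n := by
    intro n
    rw [hr, ← Real.exp_nat_mul]
    congr 1
    field_simp
  have hpos : HasSum (fun n : ℕ => G n) ((1 - r)⁻¹ + 1) := by
    have h1 : HasSum (fun n : ℕ => G ((n : ℤ) + 1)) (1 - r)⁻¹ := by
      have : (fun n : ℕ => G ((n : ℤ) + 1)) = fun n : ℕ => r ^ n := by
        funext n
        rw [hG]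
        simp only
        have habs : |((n : ℤ) + 1 : ℝ)| = (n : ℝ) + 1 := by
          push_cast
          exact abs_of_nonneg (by positivity)
        rw [show (((n : ℤ) + 1 : ℤ) : ℝ) = ((n : ℤ) : ℝ) + 1 by push_cast; ring]
        rw [show |((n : ℤ) : ℝ) + 1| = (n : ℝ) + 1 by push_cast; exact abs_of_nonneg (by positivity)]
        rw [show max ((n : ℝ) + 1 - 1) 0 = (n : ℝ) by simp]
        exact hshift n
      rw [this]; exact hgeo
    have h2 : HasSum (fun n : ℕ => G (n + 1 : ℕ)) (1 - r)⁻¹ := by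
      convert h1 using 2 with n
      exact congrArg G (Nat.cast_succ n)
    have := (hasSum_nat_add_iff (f := fun n : ℕ => G n) 1).mp h2
    simp only [Finset.range_one, Finset.sum_singleton] at this
    have hG0 : G ((0 : ℕ) : ℤ) = 1 := by
      rw [hG]; simp
    rwa [hG0] at this
  have hneg : HasSum (fun n : ℕ => G (-((n : ℤ) + 1))) (1 - r)⁻¹ := by
    have : (fun n : ℕ => G (-((n : ℤ) + 1))) = fun n : ℕ => r ^ n := by
      funext n
      rw [hG]
      simp only
      rw [show ((-((n : ℤ) + 1) : ℤ) : ℝ) = -(((n : ℝ)) + 1) by push_cast; ring]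
      rw [abs_neg, show |((n : ℝ)) + 1| = (n : ℝ) + 1 from abs_of_nonneg (by positivity)]
      rw [show max ((n : ℝ) + 1 - 1) 0 = (n : ℝ) by simp]
      exact hshift n
    rw [this]; exact hgeo
  have hGsum : HasSum G ((1 - r)⁻¹ + 1 + (1 - r)⁻¹) :=
    HasSum.of_nat_of_neg_add_one hpos hneg
  have hkey : ∀ m : ℤ, Real.exp (-(x + x' - (2 * m + 1) * L) ^ 2 / (4 * β)) ≤ E * G m :=
    fun m => stmt_9_key L β x x' m hL hβ hx1 hx2 hx1' hx2'
  have hMaj : HasSum (fun m : ℤ => E * G m) (E * ((1 - r)⁻¹ + 1 + (1 - r)⁻¹)) :=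
    hGsum.mul_left E
  have hSummable : Summable (fun m : ℤ => Real.exp (-(x + x' - (2 * m + 1) * L) ^ 2 / (4 * β))) :=
    Summable.of_nonneg_of_le (fun m => (Real.exp_pos _).le) hkey hMaj.summable
  have h1 : ∑' m : ℤ, Real.exp (-(x + x' - (2 * m + 1) * L) ^ 2 / (4 * β))
      ≤ E * ((1 - r)⁻¹ + 1 + (1 - r)⁻¹) := by
    calc ∑' m : ℤ, Real.exp (-(x + x' - (2 * m + 1) * L) ^ 2 / (4 * β))
        ≤ ∑' m : ℤ, E * G m := Summable.tsum_le_tsum hkey hSummable hMaj.summable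
      _ = E * ((1 - r)⁻¹ + 1 + (1 - r)⁻¹) := hMaj.tsum_eq
  have hinv : (1 - r)⁻¹ ≤ 1 + β := by
    have hβ1 : (0 : ℝ) < 1 + β := by linarith
    have hrle : r ≤ β / (1 + β) := by
      have hexp : 1 / β + 1 ≤ Real.exp (1 / β) := Real.add_one_le_exp (1 / β)
      have : r = (Real.exp (1 / β))⁻¹ := by rw [hr, ← Real.exp_neg]
      rw [this]
      rw [inv_le_iff_one_le_mul₀ (Real.exp_pos _)]
      rw [div_mul_eq_mul_div, le_div_iff₀ hβ1]
      have hβ0 : (0 : ℝ) < β := hβ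
      calc (1 : ℝ) * (1 + β) = 1 + β := by ring
        _ ≤ β * (1 / β + 1) := by rw [mul_add, mul_one_div, div_self hβ0.ne']; linarith
        _ ≤ β * Real.exp (1 / β) := by
            apply mul_le_mul_of_nonneg_left hexp hβ0.le
      -- done
    have h1r : 1 / (1 + β) ≤ 1 - r := by
      have : β / (1 + β) = 1 - 1 / (1 + β) := by field_simp; ring
      rw [this] at hrle
      linarith
    have h1r0 : (0 : ℝ) < 1 - r := by linarith
    rw [← one_div]
    rw [div_le_iff₀ h1r0]
    rw [div_le_iff₀ hβ1] at h1r
    linarith [mul_comm (1 - r) (1 + β)]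
  calc ∑' m : ℤ, Real.exp (-(x + x' - (2 * m + 1) * L) ^ 2 / (4 * β))
      ≤ E * ((1 - r)⁻¹ + 1 + (1 - r)⁻¹) := h1
    _ ≤ E * ((1 + β) + 1 + (1 + β)) := by
        apply mul_le_mul_of_nonneg_left _ hE0.le
        linarith
    _ ≤ 3 * (1 + β) * E := by nlinarith
end

section
/- Let (a_j)_{j∈ℕ} be positive reals with a_j ≤ r for all j and Σ_j a_j < ∞, and let 0 < x < 1/r. Define p(φ) = −(1/2) Σ_j log[ (1 − x a_j cos φ)² + x² a_j² sin² φ ] for φ ∈ ℝ (the series converges absolutely and each argument of log is positive). Then: (i) p is even, p(−φ) = p(φ); (ii) p is differentiable with p'(φ) = −x sin φ · Σ_j a_j / |1 − x a_j e^{iφ}|², so p is decreasing on [0, π]; (iii) p is twice differentiable at 0 with p''(0) = −x Σ_j a_j / (1 − x a_j)². -/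
open Real

lemma normsq_aux (c φ : ℝ) : ‖(1:ℂ) - (c:ℂ) * Complex.exp (φ * Complex.I)‖^2
    = 1 - 2*c*Real.cos φ + c^2 := by
  have h : (1:ℂ) - (c:ℂ) * Complex.exp (φ * Complex.I)
      = ((1 - c*Real.cos φ : ℝ) : ℂ) + ((-(c*Real.sin φ) : ℝ) : ℂ) * Complex.I := by
    rw [show ((φ:ℝ):ℂ) * Complex.I = (φ:ℂ) * Complex.I from rfl, Complex.exp_mul_I]
    push_cast [← Complex.ofReal_cos, ← Complex.ofReal_sin]
    ring
  rw [h, Complex.sq_norm, Complex.normSq_add_mul_I]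
  have := Real.sin_sq_add_cos_sq φ
  nlinarith [this]

/-- Darwin–Fowler input: the real part of the finite-volume grand canonical
pressure along the circle of radius `x`. With `0 < a_j ≤ r`, `Σ a_j < ∞`,
`0 < x < 1/r`, and `p(φ) = −(1/2) Σ_j log[(1 − x a_j cos φ)² + x² a_j² sin² φ]`:
(i) `p` is even; (ii) `p` is differentiable with
`p'(φ) = −x sin φ · Σ_j a_j/|1 − x a_j e^{iφ}|²`, hence decreasing on `[0, π]`;
(iii) `p` is twice differentiable at `0` with `p''(0) = −x Σ_j a_j/(1 − x a_j)²`. -/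
theorem stmt_18 (a : ℕ → ℝ) (r x : ℝ) (ha : ∀ j, 0 < a j) (har : ∀ j, a j ≤ r)
    (hsum : Summable a) (hx : 0 < x) (hxr : x < 1 / r) (p : ℝ → ℝ)
    (hp : ∀ φ : ℝ, p φ = -(1 / 2) * ∑' j : ℕ,
      Real.log ((1 - x * a j * Real.cos φ) ^ 2 + x ^ 2 * (a j) ^ 2 * (Real.sin φ) ^ 2)) :
    (∀ φ : ℝ, p (-φ) = p φ) ∧
    (∀ φ : ℝ, HasDerivAt p
      (-(x * Real.sin φ) *
        ∑' j : ℕ, a j / ‖(1 : ℂ) - (x : ℂ) * (a j : ℂ) * Complex.exp (φ * Complex.I)‖ ^ 2) φ) ∧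
    AntitoneOn p (Set.Icc 0 π) ∧
    HasDerivAt (deriv p) (-(x * ∑' j : ℕ, a j / (1 - x * a j) ^ 2)) 0 := by
  have hr : 0 < r := (ha 0).trans_le (har 0)
  have hq : x * r < 1 := by
    have := (lt_div_iff₀ hr).mp hxr; linarith
  have hc : ∀ j, 0 < x * a j := fun j => mul_pos hx (ha j)
  have hcq : ∀ j, x * a j ≤ x * r := fun j => mul_le_mul_of_nonneg_left (har j) hx.le
  set ε : ℝ := (1 - x * r)^2 with hεdef
  have hε : 0 < ε := by
    have : 0 < 1 - x * r := by linarith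
    positivity
  set g : ℕ → ℝ → ℝ := fun j φ => 1 - 2*(x*a j)*Real.cos φ + (x*a j)^2 with hgdef
  have hgl : ∀ j φ, ε ≤ g j φ := by
    intro j φ
    have h1 := Real.cos_le_one φ
    have h2 := hc j
    have h3 := hcq j
    simp only [hgdef, hεdef]
    nlinarith
  have hgpos : ∀ j φ, 0 < g j φ := fun j φ => lt_of_lt_of_le hε (hgl j φ)
  have horig : ∀ j φ, (1 - x*a j*Real.cos φ)^2 + x^2*(a j)^2*(Real.sin φ)^2 = g j φ := by
    intro j φ
    simp only [hgdef]
    have := Real.sin_sq_add_cos_sq φ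
    nlinarith
  have hnorm : ∀ (j : ℕ) (φ : ℝ),
      ‖(1 : ℂ) - (x : ℂ) * (a j : ℂ) * Complex.exp (φ * Complex.I)‖ ^ 2 = g j φ := by
    intro j φ
    have h := normsq_aux (x * a j) φ
    simp only [hgdef]
    rw [← h]
    push_cast
    ring_nf
  have hgd : ∀ j φ, HasDerivAt (fun ψ => g j ψ) (2*(x*a j)*Real.sin φ) φ := by
    intro j φ
    have h1 : HasDerivAt (fun ψ => Real.cos ψ) (-Real.sin φ) φ := Real.hasDerivAt_cos φ
    have h2 := ((h1.const_mul (2*(x*a j))).const_sub 1).add_const ((x*a j)^2)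
    exact h2.congr_deriv (by ring)
  have hld : ∀ j φ, HasDerivAt (fun ψ => Real.log (g j ψ)) (2*(x*a j)*Real.sin φ / g j φ) φ :=
    fun j φ => (hgd j φ).log (hgpos j φ).ne'
  have hbound : ∀ j φ, ‖2*(x*a j)*Real.sin φ / g j φ‖ ≤ (2*x/ε) * a j := by
    intro j φ
    rw [Real.norm_eq_abs, abs_div, abs_of_pos (hgpos j φ)]
    have hcj := hc j
    have h1 : |2*(x*a j)*Real.sin φ| ≤ 2*(x*a j) := by
      rw [abs_mul, abs_of_pos (by linarith : (0:ℝ) < 2*(x*a j))]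
      nlinarith [abs_sin_le_one φ, abs_nonneg (Real.sin φ)]
    calc |2*(x*a j)*Real.sin φ| / g j φ ≤ (2*(x*a j)) / ε :=
          div_le_div₀ (by linarith) h1 hε (hgl j φ)
      _ = (2*x/ε) * a j := by ring
  have hu : Summable (fun j => (2*x/ε) * a j) := hsum.mul_left _
  have hg0 : ∀ j, g j 0 = (1 - x*a j)^2 := by
    intro j; simp only [hgdef, Real.cos_zero]; ring
  have hlog0 : Summable (fun j => Real.log (g j 0)) := by
    apply Summable.of_norm_bounded (hsum.mul_left (2*x/ε))
    intro j
    have hgj := hgpos j 0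
    have hcj := hc j
    have hle1 : g j 0 ≤ 1 := by
      rw [hg0 j]
      have := hc j; have := hcq j
      nlinarith
    have hlognp : Real.log (g j 0) ≤ 0 := Real.log_nonpos hgj.le hle1
    rw [Real.norm_eq_abs, abs_of_nonpos hlognp]
    have hinv : Real.log (g j 0)⁻¹ ≤ (g j 0)⁻¹ - 1 :=
      Real.log_le_sub_one_of_pos (by positivity)
    rw [Real.log_inv] at hinv
    have h2 : (g j 0)⁻¹ - 1 = (1 - g j 0) / g j 0 := by field_simp
    have h3 : (1 - g j 0) / g j 0 ≤ (2 * (x * a j)) / ε := by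
      apply div_le_div₀ (by linarith) _ hε (hgl j 0)
      rw [hg0 j]; have := hcq j; nlinarith
    calc -Real.log (g j 0) ≤ (g j 0)⁻¹ - 1 := hinv
      _ = (1 - g j 0) / g j 0 := h2
      _ ≤ (2 * (x * a j)) / ε := h3
      _ = (2*x/ε) * a j := by ring
  have key : ∀ φ, HasDerivAt (fun ψ => ∑' j, Real.log (g j ψ))
      (∑' j, 2*(x*a j)*Real.sin φ / g j φ) φ :=
    fun φ => hasDerivAt_tsum hu hld hbound hlog0 φ
  have hpe : p = fun φ => -(1/2) * ∑' j, Real.log (g j φ) := by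
    funext φ
    rw [hp φ]
    congr 1
    exact tsum_congr fun j => by rw [horig j φ]
  have hii : ∀ φ, HasDerivAt p (-(x*Real.sin φ) * ∑' j, a j / g j φ) φ := by
    intro φ
    rw [hpe]
    have h := (key φ).const_mul (-(1/2) : ℝ)
    refine h.congr_deriv ?_
    rw [← tsum_mul_left, ← tsum_mul_left]
    exact tsum_congr fun j => by ring
  have hSnorm : ∀ φ : ℝ, (∑' j : ℕ, a j /
      ‖(1 : ℂ) - (x : ℂ) * (a j : ℂ) * Complex.exp ((φ : ℂ) * Complex.I)‖ ^ 2)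
      = ∑' j, a j / g j φ :=
    fun φ => tsum_congr fun j => by rw [hnorm j φ]
  have hii' : ∀ φ : ℝ, HasDerivAt p
      (-(x * Real.sin φ) *
        ∑' j : ℕ, a j / ‖(1 : ℂ) - (x : ℂ) * (a j : ℂ) * Complex.exp (φ * Complex.I)‖ ^ 2) φ := by
    intro φ
    rw [hSnorm φ]
    exact hii φ
  refine ⟨?_, hii', ?_, ?_⟩
  · intro φ
    rw [hp (-φ), hp φ]
    simp [Real.cos_neg, Real.sin_neg, neg_sq]
  · -- Antitone
    have hderiv : ∀ φ, deriv p φ = -(x*Real.sin φ) * ∑' j, a j / g j φ :=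
      fun φ => (hii φ).deriv
    apply antitoneOn_of_deriv_nonpos (convex_Icc 0 π)
    · exact (Differentiable.continuous fun φ => (hii φ).differentiableAt).continuousOn
    · exact fun φ _ => ((hii φ).differentiableAt).differentiableWithinAt
    · intro φ hφ
      rw [interior_Icc] at hφ
      rw [hderiv φ]
      have hsin : 0 < Real.sin φ := Real.sin_pos_of_pos_of_lt_pi hφ.1 hφ.2
      have hS : 0 ≤ ∑' j, a j / g j φ :=
        tsum_nonneg fun j => div_nonneg (ha j).le (hgpos j φ).le
      nlinarith [mul_nonneg (mul_nonneg hx.le hsin.le) hS]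
  · -- second derivative at 0
    have hDp : deriv p = fun φ => -(x*Real.sin φ) * ∑' j, a j / g j φ :=
      funext fun φ => (hii φ).deriv
    rw [hDp]
    have hfd : ∀ j φ, HasDerivAt (fun ψ => a j / g j ψ)
        ((0 * g j φ - a j * (2*(x*a j)*Real.sin φ)) / (g j φ)^2) φ :=
      fun j φ => (hasDerivAt_const φ (a j)).div (hgd j φ) (hgpos j φ).ne'
    have hbound2 : ∀ j φ, ‖(0 * g j φ - a j * (2*(x*a j)*Real.sin φ)) / (g j φ)^2‖
        ≤ (2*x*r/ε^2) * a j := by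
      intro j φ
      have hcj := hc j
      rw [Real.norm_eq_abs, abs_div, abs_of_pos (pow_pos (hgpos j φ) 2)]
      have h1 : |0 * g j φ - a j * (2*(x*a j)*Real.sin φ)| ≤ 2*x*r*a j := by
        rw [zero_mul, zero_sub, abs_neg, abs_mul, abs_mul,
          abs_of_pos (ha j), abs_of_pos (by linarith : (0:ℝ) < 2*(x*a j))]
        have h2 := abs_sin_le_one φ
        have h3 := hcq j
        nlinarith [ha j, abs_nonneg (Real.sin φ),
          mul_le_mul_of_nonneg_left h2 (by nlinarith [ha j] : (0:ℝ) ≤ 2 * (a j * (x * a j))),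
          mul_le_mul_of_nonneg_left h3 (by nlinarith [ha j] : (0:ℝ) ≤ 2 * a j)]
      have h4 : ε^2 ≤ (g j φ)^2 := by nlinarith [hgl j φ, hε]
      have h5 : (0:ℝ) ≤ 2*x*r*a j := by nlinarith [mul_pos (mul_pos hx hr) (ha j)]
      calc |0 * g j φ - a j * (2*(x*a j)*Real.sin φ)| / (g j φ)^2
          ≤ (2*x*r*a j) / ε^2 := div_le_div₀ h5 h1 (by positivity) h4
        _ = (2*x*r/ε^2) * a j := by ring
    have hS0sum : Summable (fun j => a j / g j 0) := by
      apply Summable.of_nonneg_of_le (fun j => div_nonneg (ha j).le (hgpos j 0).le)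
        (fun j => ?_) (hsum.div_const ε)
      exact div_le_div_of_nonneg_left (ha j).le hε (hgl j 0)
    have hSd : HasDerivAt (fun ψ => ∑' j, a j / g j ψ)
        (∑' j, (0 * g j 0 - a j * (2*(x*a j)*Real.sin 0)) / (g j 0)^2) 0 :=
      hasDerivAt_tsum (hsum.mul_left (2*x*r/ε^2)) hfd hbound2 hS0sum 0
    have hzero : (∑' j, (0 * g j 0 - a j * (2*(x*a j)*Real.sin 0)) / (g j 0)^2) = 0 := by
      simp [Real.sin_zero]
    have h1 : HasDerivAt (fun φ => -(x*Real.sin φ)) (-(x*Real.cos 0)) 0 :=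
      ((Real.hasDerivAt_sin 0).const_mul x).neg
    have hfinal := h1.mul hSd
    refine hfinal.congr_deriv ?_
    rw [hzero, Real.cos_zero, Real.sin_zero]
    have hS0 : (∑' j : ℕ, a j / (1 - x * a j)^2) = ∑' j, a j / g j 0 :=
      tsum_congr fun j => by rw [hg0 j]
    rw [hS0]
    ring
end
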